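/- Let G = (V, E) be a finite simple graph. The orthogonal complement of T_G in (2^V → ℝ) is spanned by the functions χ̂_e = (χ_e − χ_∅)/2 for e ∈ E, where χ_σ(τ) = (-1)^{|σ ∩ τ|}. -/

import Mathlib

open Finset

/-- Fourier character on the Boolean cube: `χ_σ(τ) = (-1)^{|σ ∩ τ|}`. -/
def fourierChar' {V : Type*} [DecidableEq V] (σ : Finset V) : Finset V → ℝ :=
  fun τ => (-1 : ℝ) ^ (σ ∩ τ).card

/-- The edges of `G`, viewed as 2-element subsets of `V`. -/
def edgeSets {V : Type*} [Fintype V] [DecidableEq V] (G : SimpleGraph V)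
    [DecidableRel G.Adj] : Finset (Finset V) :=
  Finset.univ.filter (fun s : Finset V => ∃ i ∈ s, ∃ j ∈ s, G.Adj i j ∧ s = {i, j})

/-- The space `T_G` of functions `T : 2^V → ℝ` such that for every edge `e` of `G`,
the sum of `T(σ)` over all `σ` whose cut contains `e` vanishes. -/
def TGset {V : Type*} [Fintype V] [DecidableEq V] (G : SimpleGraph V) :
    Set (Finset V → ℝ) :=
  {T | ∀ i j : V, G.Adj i j →
    ∑ σ ∈ Finset.univ.filter
        (fun σ : Finset V => (i ∈ σ ∧ j ∉ σ) ∨ (i ∉ σ ∧ j ∈ σ)), T σ = 0}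

open RealInnerProductSpace in
lemma mem_orthogonal_span_aux {E : Type*} [NormedAddCommGroup E] [InnerProductSpace ℝ E]
    (s : Set E) (v : E) :
    v ∈ (Submodule.span ℝ s)ᗮ ↔ ∀ u ∈ s, ⟪u, v⟫ = 0 := by
  rw [Submodule.mem_orthogonal]
  constructor
  · exact fun h u hu => h u (Submodule.subset_span hu)
  · intro h u hu
    induction hu using Submodule.span_induction with
    | mem x hx => exact h x hx
    | zero => simp
    | add x y _ _ hx hy => rw [inner_add_left, hx, hy, add_zero]
    | smul a x _ hx => rw [inner_smul_left, hx, mul_zero]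

lemma coeff_aux {V : Type*} [DecidableEq V] {i j : V} (hij : i ≠ j) (τ : Finset V) :
    (((1 / 2 : ℝ) • (fourierChar' {i, j} - fourierChar' ∅) : Finset V → ℝ)) τ
      = if (i ∈ τ ∧ j ∉ τ) ∨ (i ∉ τ ∧ j ∈ τ) then -1 else 0 := by
  have hemp : fourierChar' (∅ : Finset V) τ = 1 := by simp [fourierChar']
  have hcard : ({i, j} ∩ τ).card
      = (if i ∈ τ then 1 else 0) + (if j ∈ τ then 1 else 0) := by
    by_cases hi : i ∈ τ <;> by_cases hj : j ∈ τ <;>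
      simp [Finset.insert_inter_of_mem, Finset.insert_inter_of_notMem,
        Finset.singleton_inter_of_mem, Finset.singleton_inter_of_notMem, hi, hj,
        Finset.card_insert_of_notMem, hij]
  simp only [Pi.smul_apply, Pi.sub_apply, hemp, fourierChar', hcard, smul_eq_mul]
  by_cases hi : i ∈ τ <;> by_cases hj : j ∈ τ <;> simp [hi, hj] <;> ring

lemma sum_aux {V : Type*} [Fintype V] [DecidableEq V] {i j : V} (hij : i ≠ j)
    (S : Finset V → ℝ) :
    ∑ α : Finset V, (((1 / 2 : ℝ) • (fourierChar' {i, j} - fourierChar' ∅) : Finset V → ℝ)) α * S α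
      = -∑ σ ∈ Finset.univ.filter
          (fun σ : Finset V => (i ∈ σ ∧ j ∉ σ) ∨ (i ∉ σ ∧ j ∈ σ)), S σ := by
  rw [← Finset.sum_neg_distrib, Finset.sum_filter]
  apply Finset.sum_congr rfl
  intro α _
  rw [coeff_aux hij]
  split_ifs <;> ring

open RealInnerProductSpace in
/-- The orthogonal complement of `T_G` is spanned by `χ̂_e = (χ_e − χ_∅)/2`, `e ∈ E`. -/
theorem stmt_8 {V : Type*} [Fintype V] [DecidableEq V] (G : SimpleGraph V)
    [DecidableRel G.Adj] :
    (↑(Submodule.span ℝ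
        {f : Finset V → ℝ | ∃ e ∈ edgeSets G,
          f = (1 / 2 : ℝ) • (fourierChar' e - fourierChar' ∅)}) : Set (Finset V → ℝ))
      = {T : Finset V → ℝ | ∀ S ∈ TGset G, ∑ α : Finset V, T α * S α = 0} := by
  classical
  set S0 : Set (Finset V → ℝ) :=
    {f : Finset V → ℝ | ∃ e ∈ edgeSets G,
      f = (1 / 2 : ℝ) • (fourierChar' e - fourierChar' ∅)} with hS0
  set s : Set (EuclideanSpace ℝ (Finset V)) := WithLp.toLp 2 '' S0 with hs
  set K : Submodule ℝ (EuclideanSpace ℝ (Finset V)) := Submodule.span ℝ s with hK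
  have hinner : ∀ x y : EuclideanSpace ℝ (Finset V), ⟪x, y⟫ = ∑ α, x α * y α := by
    intro x y
    simp [PiLp.inner_apply, RCLike.inner_apply, mul_comm]
  have hperp : ∀ S : EuclideanSpace ℝ (Finset V), S ∈ Kᗮ ↔ S.ofLp ∈ TGset G := by
    intro S
    rw [hK, mem_orthogonal_span_aux]
    constructor
    · intro h i j hadj
      have hmem : WithLp.toLp 2
          ((1 / 2 : ℝ) • (fourierChar' {i, j} - fourierChar' ∅) : Finset V → ℝ) ∈ s := by
        refine ⟨_, ⟨{i, j}, ?_, rfl⟩, rfl⟩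
        simp only [edgeSets, Finset.mem_filter, Finset.mem_univ, true_and]
        exact ⟨i, by simp, j, by simp, hadj, rfl⟩
      have := h _ hmem
      rw [hinner] at this
      simp only [WithLp.ofLp_toLp] at this
      rw [sum_aux hadj.ne, neg_eq_zero] at this
      exact this
    · rintro h u ⟨_, ⟨e, he, rfl⟩, rfl⟩
      simp only [edgeSets, Finset.mem_filter, Finset.mem_univ, true_and] at he
      obtain ⟨i, -, j, -, hadj, rfl⟩ := he
      rw [hinner]
      simp only [WithLp.ofLp_toLp]
      rw [sum_aux hadj.ne, h i j hadj, neg_zero]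
  have hdouble : Kᗮᗮ = K := Submodule.orthogonal_orthogonal K
  set e := (WithLp.linearEquiv 2 ℝ (Finset V → ℝ)).symm with he
  have hKe : K = (Submodule.span ℝ S0).map
      (e : (Finset V → ℝ) →ₗ[ℝ] EuclideanSpace ℝ (Finset V)) := by
    rw [hK, ← Submodule.span_image]; rfl
  ext T
  simp only [SetLike.mem_coe, Set.mem_setOf_eq]
  have hT : T ∈ Submodule.span ℝ S0 ↔ WithLp.toLp 2 T ∈ K := by
    rw [hKe, Submodule.mem_map]
    constructor
    · intro h; exact ⟨T, h, rfl⟩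
    · rintro ⟨y, hy, hyT⟩
      have hyT' : y = T := congrArg WithLp.ofLp hyT
      exact hyT' ▸ hy
  rw [hT, ← hdouble, Submodule.mem_orthogonal]
  constructor
  · intro h S hS
    have := h (WithLp.toLp 2 S) (by rw [hperp]; exact hS)
    rw [hinner] at this
    rw [← this]
    exact Finset.sum_congr rfl fun α _ => mul_comm _ _
  · intro h u hu
    have hu' : u.ofLp ∈ TGset G := (hperp u).1 hu
    have := h _ hu'
    rw [hinner, ← this]
    exact Finset.sum_congr rfl fun α _ => mul_comm _ _
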